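/- Let α, β > 0 and let f be the probability density function of the power Lindley distribution PL(α, β). Then for every positive integer k, the k-th moment equals m_k = ∫_0^∞ x^k f(x) dx = k Γ(k/α) [α(β+1) + k] / (α² β^{k/α} (β+1)), where Γ is Euler's gamma function. -/

import Mathlib

open MeasureTheory Real

lemma aux_integrable_exp_neg_mul {b : ℝ} (s : ℝ) (hs : 0 < s) (hb : 0 < b) :
    MeasureTheory.IntegrableOn (fun y : ℝ => y ^ (s - 1) * Real.exp (-b * y))
      (Set.Ioi 0) := by
  have h0 := Real.GammaIntegral_convergent hs
  have h1 : MeasureTheory.IntegrableOn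
      (fun y : ℝ => Real.exp (-(b * y)) * (b * y) ^ (s - 1)) (Set.Ioi 0) := by
    have := (integrableOn_Ioi_comp_mul_left_iff
      (fun x : ℝ => Real.exp (-x) * x ^ (s - 1)) 0 hb).mpr
    simpa using this (by simpa using h0)
  have h2 : MeasureTheory.IntegrableOn
      (fun y : ℝ => b ^ (1 - s) * (Real.exp (-(b * y)) * (b * y) ^ (s - 1)))
      (Set.Ioi 0) := h1.const_mul (b ^ (1 - s))
  refine h2.congr_fun (fun y hy => ?_) measurableSet_Ioi
  have hy0 : 0 < y := hy
  beta_reduce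
  rw [Real.mul_rpow hb.le hy0.le]
  rw [show b ^ (1 - s) * (Real.exp (-(b * y)) * (b ^ (s - 1) * y ^ (s - 1)))
      = (b ^ (1 - s) * b ^ (s - 1)) * (y ^ (s - 1) * Real.exp (-(b * y))) by ring,
    ← Real.rpow_add hb]
  simp [neg_mul]

lemma aux_integrable {p q b : ℝ} (hp : 0 < p) (hq : -1 < q) (hb : 0 < b) :
    MeasureTheory.IntegrableOn (fun x : ℝ => x ^ q * Real.exp (-b * x ^ p))
      (Set.Ioi 0) := by
  have hs : 0 < (q + 1) / p := div_pos (by linarith) hp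
  have h := (integrableOn_Ioi_comp_rpow_iff'
      (fun y : ℝ => y ^ ((q + 1) / p - 1) * Real.exp (-b * y)) hp.ne').mpr
    (aux_integrable_exp_neg_mul _ hs hb)
  refine h.congr_fun (fun x hx => ?_) measurableSet_Ioi
  have hx0 : 0 < x := hx
  have hexp : p - 1 + p * ((q + 1) / p - 1) = q := by field_simp; ring
  beta_reduce
  rw [smul_eq_mul, ← mul_assoc, ← Real.rpow_mul hx0.le, ← Real.rpow_add hx0, hexp]

/-- The `k`-th moment of the power Lindley distribution `PL(α, β)`:
`m_k = ∫_0^∞ x^k f(x) dx = k Γ(k/α) [α(β+1)+k] / (α² β^{k/α} (β+1))`. -/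
theorem power_lindley_moments (α β : ℝ) (hα : 0 < α) (hβ : 0 < β)
    (f : ℝ → ℝ)
    (hf : ∀ x : ℝ, f x = if 0 < x then
      (α * β ^ 2 / (β + 1)) * (1 + x ^ α) * x ^ (α - 1) * Real.exp (-β * x ^ α) else 0) :
    ∀ k : ℕ, 0 < k →
      ∫ x in Set.Ioi (0 : ℝ), x ^ k * f x =
        (k : ℝ) * Real.Gamma ((k : ℝ) / α) * (α * (β + 1) + (k : ℝ)) /
          (α ^ 2 * β ^ ((k : ℝ) / α) * (β + 1)) := by
  intro k hk
  set C : ℝ := α * β ^ 2 / (β + 1) with hC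
  have hk0 : (0 : ℝ) < k := by exact_mod_cast hk
  have hq1 : (-1 : ℝ) < (k : ℝ) + α - 1 := by linarith
  have hq2 : (-1 : ℝ) < (k : ℝ) + 2 * α - 1 := by linarith
  have hint1 := aux_integrable hα hq1 hβ
  have hint2 := aux_integrable hα hq2 hβ
  have key : ∫ x in Set.Ioi (0 : ℝ), x ^ k * f x =
      ∫ x in Set.Ioi (0 : ℝ),
        (C * (x ^ ((k : ℝ) + α - 1) * Real.exp (-β * x ^ α))
          + C * (x ^ ((k : ℝ) + 2 * α - 1) * Real.exp (-β * x ^ α))) := by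
    refine setIntegral_congr_fun measurableSet_Ioi (fun x hx => ?_)
    have hx0 : (0 : ℝ) < x := hx
    rw [hf x, if_pos hx0]
    have e1 : x ^ ((k : ℝ) + α - 1) = x ^ (k : ℕ) * x ^ (α - 1) := by
      rw [← Real.rpow_natCast x k, ← Real.rpow_add hx0]
      ring_nf
    have e2 : x ^ ((k : ℝ) + 2 * α - 1) = x ^ (k : ℕ) * x ^ α * x ^ (α - 1) := by
      rw [← Real.rpow_natCast x k, ← Real.rpow_add hx0, ← Real.rpow_add hx0]
      ring_nf
    rw [e1, e2]
    ring
  rw [key, MeasureTheory.integral_add (hint1.const_mul C) (hint2.const_mul C),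
    MeasureTheory.integral_const_mul, MeasureTheory.integral_const_mul,
    integral_rpow_mul_exp_neg_mul_rpow hα hq1 hβ,
    integral_rpow_mul_exp_neg_mul_rpow hα hq2 hβ]
  have hα' : α ≠ 0 := hα.ne'
  have e1 : ((k : ℝ) + α - 1 + 1) / α = (k : ℝ) / α + 1 := by field_simp; ring
  have e2 : ((k : ℝ) + 2 * α - 1 + 1) / α = (k : ℝ) / α + 2 := by field_simp; ring
  rw [e1, e2]
  set t : ℝ := (k : ℝ) / α with ht
  have e1n : -((k : ℝ) + α - 1 + 1) / α = -(t + 1) := by rw [neg_div, e1]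
  have e2n : -((k : ℝ) + 2 * α - 1 + 1) / α = -(t + 2) := by rw [neg_div, e2]
  rw [e1n, e2n]
  have ht0 : 0 < t := div_pos hk0 hα
  have hG1 : Real.Gamma (t + 1) = t * Real.Gamma t := Real.Gamma_add_one ht0.ne'
  have hG2 : Real.Gamma (t + 2) = (t + 1) * (t * Real.Gamma t) := by
    rw [show t + 2 = (t + 1) + 1 by ring, Real.Gamma_add_one (by positivity), hG1]
  have hb1 : β ^ (-(t + 1)) = (β ^ t * β)⁻¹ := by
    rw [Real.rpow_neg hβ.le, Real.rpow_add hβ, Real.rpow_one]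
  have hb2 : β ^ (-(t + 2)) = (β ^ t * β ^ (2 : ℕ))⁻¹ := by
    rw [Real.rpow_neg hβ.le, Real.rpow_add hβ, ← Real.rpow_natCast β 2]
    norm_num
  have hkt : (k : ℝ) = t * α := by rw [ht]; field_simp
  rw [hG1, hG2, hb1, hb2, hC, hkt]
  have hB : (0 : ℝ) < β ^ t := Real.rpow_pos_of_pos hβ _
  have hβ1 : (0 : ℝ) < β + 1 := by linarith
  field_simp
  ring
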